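/- Let f : M → Y be a continuous function with compact support and let U ⊆ M be an open neighbourhood of supp(f). Then every neighbourhood of f in C(M, Y) with the compact-open topology contains a smooth function g : M → Y whose support is contained in U. -/

import Mathlib

open Set Function
open scoped Manifold ContDiff

/-!
Approximate `f` uniformly within `ε` by a smooth `h` (a smooth partition of unity glues local
constants, using convexity of balls), then multiply by a smooth cutoff `χ : M → [0, 1]` that is
`1` on `tsupport f` and supported in `U`. On `tsupport f` nothing changes, and off it `f = 0`
and `‖χ • h‖ ≤ ‖h‖ < ε`. A uniform `ε`-approximation lies in every compact-open neighbourhood.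
-/

theorem ContinuousMap.exists_pos_forall_dist_lt_subset_of_mem_nhds
    {X Y : Type*} [TopologicalSpace X] [PseudoMetricSpace Y] {f : C(X, Y)} {W : Set C(X, Y)}
    (hW : W ∈ nhds f) : ∃ ε > 0, {g : C(X, Y) | ∀ x, dist (g x) (f x) < ε} ⊆ W := by
  have hbasis := (Metric.uniformity_basis_dist (α := Y)).compactConvergenceUniformity (α := X)
  obtain ⟨⟨K, ε⟩, ⟨-, hε⟩, hKW⟩ := (nhds_basis_uniformity' hbasis).mem_iff.1 hW
  exact ⟨ε, hε, fun g hg ↦ hKW fun x _ ↦ by simpa [dist_comm] using hg x⟩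

theorem dist_smul_lt_of_mem_Icc {Y : Type*} [SeminormedAddCommGroup Y] [NormedSpace ℝ Y]
    {t ε : ℝ} {v w : Y} (ht : t ∈ Icc 0 1) (htw : t = 1 ∨ w = 0) (hvw : dist v w < ε) :
    dist (t • v) w < ε := by
  rcases htw with rfl | rfl
  · rwa [one_smul]
  · rw [dist_zero_right] at hvw ⊢
    calc ‖t • v‖ = |t| * ‖v‖ := by rw [norm_smul, Real.norm_eq_abs]
      _ ≤ 1 * ‖v‖ := by gcongr; exact abs_le.2 ⟨by linarith [ht.1], ht.2⟩
      _ < ε := by rwa [one_mul]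

section Manifold

variable {E : Type*} [NormedAddCommGroup E] [NormedSpace ℝ E] [FiniteDimensional ℝ E]
  {H : Type*} [TopologicalSpace H] (I : ModelWithCorners ℝ E H)
  {M : Type*} [TopologicalSpace M] [ChartedSpace H M] [IsManifold I ∞ M]
  [SigmaCompactSpace M] [T2Space M] {n : ℕ∞}

theorem exists_contMDiffMap_forall_dist_lt {Y : Type*} [NormedAddCommGroup Y] [NormedSpace ℝ Y]
    {f : M → Y} (hf : Continuous f) {ε : ℝ} (hε : 0 < ε) :
    ∃ h : C^n⟮I, M; 𝓘(ℝ, Y), Y⟯, ∀ x, dist (h x) (f x) < ε :=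
  exists_contMDiffMap_forall_mem_convex_of_local_const I (t := fun x ↦ Metric.ball (f x) ε)
    (fun x ↦ convex_ball _ _)
    fun x ↦ ⟨f x, (hf.tendsto x).eventually (Metric.ball_mem_nhds _ hε) |>.mono
      fun _ hy ↦ by rwa [Metric.mem_ball, dist_comm]⟩

theorem IsCompact.exists_contMDiffMap_eqOn_one_tsupport_subset {s U : Set M} (hs : IsCompact s)
    (hU : IsOpen U) (hsU : s ⊆ U) :
    ∃ χ : C^n⟮I, M; 𝓘(ℝ), ℝ⟯, EqOn χ 1 s ∧ tsupport χ ⊆ U ∧ ∀ x, χ x ∈ Icc 0 1 := by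
  have : LocallyCompactSpace M := Manifold.locallyCompact_of_finiteDimensional I
  obtain ⟨L, hL, hsL, hLU⟩ := exists_compact_between hs hU hsU
  obtain ⟨χ, hχ0, hχ1, hχ01⟩ := exists_contMDiffMap_zero_one_of_isClosed I (n := n)
    isOpen_interior.isClosed_compl hs.isClosed (disjoint_compl_left_iff_subset.2 hsL)
  have hsupp : support χ ⊆ interior L := fun x hx ↦ by_contra fun hxL ↦ hx (hχ0 hxL)
  exact ⟨χ, hχ1, (closure_minimal (hsupp.trans interior_subset) hL.isClosed).trans hLU, hχ01⟩

end Manifold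

theorem smooth_approx_compactSupport_general
    {EB : Type*} [NormedAddCommGroup EB] [NormedSpace ℝ EB] [FiniteDimensional ℝ EB]
    {HB : Type*} [TopologicalSpace HB] {IB : ModelWithCorners ℝ EB HB}
    {M : Type*} [TopologicalSpace M] [ChartedSpace HB M] [IsManifold IB (⊤ : ℕ∞) M]
    [SigmaCompactSpace M] [T2Space M]
    {Y : Type*} [NormedAddCommGroup Y] [NormedSpace ℝ Y]
    (f : C(M, Y)) (hf : HasCompactSupport (f : M → Y))
    {U : Set M} (hU : IsOpen U) (hsupp : tsupport (f : M → Y) ⊆ U) :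
    ∀ W ∈ nhds f, ∃ g : C(M, Y), g ∈ W ∧
      ContMDiff IB 𝓘(ℝ, Y) (⊤ : ℕ∞) (g : M → Y) ∧ tsupport (g : M → Y) ⊆ U := by
  intro W hW
  obtain ⟨ε, hε, hεW⟩ := ContinuousMap.exists_pos_forall_dist_lt_subset_of_mem_nhds hW
  obtain ⟨χ, hχ1, hχU, hχ01⟩ :=
    IsCompact.exists_contMDiffMap_eqOn_one_tsupport_subset IB hf (n := (⊤ : ℕ∞)) hU hsupp
  obtain ⟨h, hh⟩ := exists_contMDiffMap_forall_dist_lt IB (n := (⊤ : ℕ∞)) f.continuous hε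
  have hg : ContMDiff IB 𝓘(ℝ, Y) (⊤ : ℕ∞) fun x ↦ χ x • h x := χ.contMDiff.smul h.contMDiff
  refine ⟨⟨_, hg.continuous⟩, hεW fun x ↦ ?_, hg, (tsupport_smul_subset_left _ _).trans hχU⟩
  exact dist_smul_lt_of_mem_Icc (hχ01 x)
    ((em (x ∈ tsupport f)).imp (hχ1 ·) image_eq_zero_of_notMem_tsupport) (hh x)

/-- A compactly supported continuous function can be approximated, in the compact-open
topology, by smooth functions supported in any given open neighbourhood of its support. -/
theorem smooth_approx_compactSupport
    {EB : Type*} [NormedAddCommGroup EB] [NormedSpace ℝ EB] [FiniteDimensional ℝ EB]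
    {HB : Type*} [TopologicalSpace HB] {IB : ModelWithCorners ℝ EB HB}
    {M : Type*} [TopologicalSpace M] [ChartedSpace HB M] [IsManifold IB (⊤ : ℕ∞) M]
    [SigmaCompactSpace M] [SecondCountableTopology M] [T2Space M]
    {Y : Type*} [NormedAddCommGroup Y] [NormedSpace ℝ Y]
    (f : C(M, Y)) (hf : HasCompactSupport (f : M → Y))
    {U : Set M} (hU : IsOpen U) (hsupp : tsupport (f : M → Y) ⊆ U) :
    ∀ W ∈ nhds f, ∃ g : C(M, Y), g ∈ W ∧
      ContMDiff IB 𝓘(ℝ, Y) (⊤ : ℕ∞) (g : M → Y) ∧ tsupport (g : M → Y) ⊆ U :=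
  smooth_approx_compactSupport_general f hf hU hsupp
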